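/- With $g_\beta(t) = \int_t^{\infty} \frac{ds}{s e^{1+(1+\beta)s}}$ and $\theta(\beta) = 1 + \int_0^{\infty} (1 - e^{-g_\beta(t)}) e^t\, dt$, one has $\lim_{\beta \to 0^+} \theta(\beta) = +\infty$. -/

import Mathlib

open MeasureTheory Set Filter
open scoped ENNReal

private lemma fmeas (β : ℝ) : Measurable (fun s : ℝ => 1 / (s * Real.exp (1 + (1 + β) * s))) := by
  fun_prop

private lemma fnonneg (β : ℝ) (s : ℝ) (hs : 0 ≤ s) :
    0 ≤ 1 / (s * Real.exp (1 + (1 + β) * s)) := by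
  positivity

private lemma fle (β : ℝ) (hβ : 0 ≤ β) (s : ℝ) (hs : 1 ≤ s) :
    1 / (s * Real.exp (1 + (1 + β) * s)) ≤ Real.exp (-1 - s) := by
  rw [div_le_iff₀ (by positivity)]
  have h1 : Real.exp (1 + s) ≤ Real.exp (1 + (1 + β) * s) := by
    apply Real.exp_le_exp.2; nlinarith
  have h2 : Real.exp (-1 - s) * Real.exp (1 + s) = 1 := by
    rw [← Real.exp_add]; norm_num
  have h3 := mul_le_mul_of_nonneg_left h1 (Real.exp_pos (-1 - s)).le
  nlinarith [Real.exp_pos (-1 - s), Real.exp_pos (1 + (1 + β) * s)]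

private lemma fintegrable (β : ℝ) (hβ : 0 ≤ β) (t : ℝ) (ht : 1 ≤ t) :
    IntegrableOn (fun s : ℝ => 1 / (s * Real.exp (1 + (1 + β) * s))) (Set.Ioi t) := by
  apply Integrable.mono (g := fun s => Real.exp (-1 - s))
  · have : IntegrableOn (fun s : ℝ => Real.exp (-1) * Real.exp (-(1:ℝ) * s)) (Set.Ioi t) :=
      (exp_neg_integrableOn_Ioi t one_pos).const_mul _
    apply this.congr_fun ?_ measurableSet_Ioi
    intro s _
    dsimp only
    rw [← Real.exp_add]; congr 1; ring
  · exact (fmeas β).aestronglyMeasurable.restrict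
  · filter_upwards [ae_restrict_mem measurableSet_Ioi] with s hs
    have hs1 : (1:ℝ) ≤ s := le_trans ht (le_of_lt hs)
    rw [Real.norm_eq_abs, Real.norm_eq_abs, abs_of_nonneg (fnonneg β s (by linarith)),
      abs_of_nonneg (Real.exp_pos _).le]
    exact fle β hβ s hs1

private lemma g_le (β : ℝ) (hβ : 0 ≤ β) (t : ℝ) (ht : 1 ≤ t) :
    (∫ s in Set.Ioi t, 1 / (s * Real.exp (1 + (1 + β) * s))) ≤ Real.exp (-2) := by
  have h1 : (∫ s in Set.Ioi t, 1 / (s * Real.exp (1 + (1 + β) * s)))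
      ≤ ∫ s in Set.Ioi t, Real.exp (-1 - s) := by
    apply setIntegral_mono_on (fintegrable β hβ t ht) ?_ measurableSet_Ioi
    · intro s hs; exact fle β hβ s (le_trans ht (le_of_lt hs))
    · have : IntegrableOn (fun s : ℝ => Real.exp (-1) * Real.exp (-(1:ℝ) * s)) (Set.Ioi t) :=
        (exp_neg_integrableOn_Ioi t one_pos).const_mul _
      apply this.congr_fun ?_ measurableSet_Ioi
      intro s _; dsimp only; rw [← Real.exp_add]; congr 1; ring
  have h2 : (∫ s in Set.Ioi t, Real.exp (-1 - s)) = Real.exp (-1) * Real.exp (-t) := by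
    have : ∀ s : ℝ, Real.exp (-1 - s) = Real.exp (-1) * Real.exp (-s) := by
      intro s; rw [← Real.exp_add]; ring_nf
    simp_rw [this]
    rw [integral_const_mul, integral_exp_neg_Ioi]
  have h3 : Real.exp (-1) * Real.exp (-t) ≤ Real.exp (-2) := by
    rw [← Real.exp_add]
    apply Real.exp_le_exp.2; linarith
  linarith

private lemma g_ge (β : ℝ) (hβ : 0 ≤ β) (t : ℝ) (ht : 1 ≤ t) :
    Real.exp (-1 - (1 + β) * (t + 1)) / (t + 1)
      ≤ ∫ s in Set.Ioi t, 1 / (s * Real.exp (1 + (1 + β) * s)) := by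
  have hsub : (∫ s in Set.Ioc t (t + 1), 1 / (s * Real.exp (1 + (1 + β) * s)))
      ≤ ∫ s in Set.Ioi t, 1 / (s * Real.exp (1 + (1 + β) * s)) := by
    apply setIntegral_mono_set (fintegrable β hβ t ht)
    · filter_upwards [ae_restrict_mem measurableSet_Ioi] with s hs
      exact fnonneg β s (by linarith [le_trans ht hs.le])
    · exact Filter.Eventually.of_forall (fun s hs => hs.1)
  have hconst : Real.exp (-1 - (1 + β) * (t + 1)) / (t + 1)
      ≤ ∫ s in Set.Ioc t (t + 1), 1 / (s * Real.exp (1 + (1 + β) * s)) := by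
    have hle : (∫ s in Set.Ioc t (t + 1), (fun _ : ℝ => Real.exp (-1 - (1 + β) * (t + 1)) / (t + 1)) s)
        ≤ ∫ s in Set.Ioc t (t + 1), 1 / (s * Real.exp (1 + (1 + β) * s)) := by
      apply setIntegral_mono_on
      · exact integrableOn_const measure_Ioc_lt_top.ne
      · exact (fintegrable β hβ t ht).mono_set (fun s hs => hs.1)
      · exact measurableSet_Ioc
      · intro s hs
        have hs0 : 0 < s := lt_of_lt_of_le (by linarith : (0:ℝ) < t) hs.1.le
        rw [div_le_div_iff₀ (by positivity) (by positivity)]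
        have he : Real.exp (1 + (1 + β) * s) ≤ Real.exp (1 + (1 + β) * (t + 1)) := by
          apply Real.exp_le_exp.2
          nlinarith [hs.2]
        have he2 : Real.exp (-1 - (1 + β) * (t + 1)) * Real.exp (1 + (1 + β) * (t + 1)) = 1 := by
          rw [← Real.exp_add]; norm_num
        have k1 := mul_le_mul_of_nonneg_left he (Real.exp_pos (-1 - (1 + β) * (t + 1))).le
        nlinarith [Real.exp_pos (-1 - (1 + β) * (t + 1)), Real.exp_pos (1 + (1 + β) * s),
          hs.2, hs.1, Real.exp_pos (1 + (1 + β) * (t + 1))]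
    have heq : (∫ s in Set.Ioc t (t + 1), (fun _ : ℝ => Real.exp (-1 - (1 + β) * (t + 1)) / (t + 1)) s)
        = Real.exp (-1 - (1 + β) * (t + 1)) / (t + 1) := by
      rw [setIntegral_const]
      rw [measureReal_def, Real.volume_Ioc]
      norm_num
    linarith [hle, heq.symm.le]
  linarith

theorem theta_tendsto_top :
    Tendsto
      (fun β : ℝ =>
        (1 : ℝ≥0∞) + ∫⁻ t in Set.Ioi (0 : ℝ),
          ENNReal.ofReal
            ((1 - Real.exp (-(∫ s in Set.Ioi t, 1 / (s * Real.exp (1 + (1 + β) * s))))) *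
              Real.exp t))
      (nhdsWithin 0 (Set.Ioi 0)) (nhds ⊤) := by
  apply ENNReal.tendsto_nhds_top
  intro n
  -- choose T
  set c : ℝ := Real.exp (-5) / 2 with hc
  have hcpos : 0 < c := by positivity
  set T : ℝ := Real.exp ((n + 1) / c) with hT
  have hT1 : 1 < T := by
    rw [hT]
    have : (0:ℝ) < (n + 1) / c := by positivity
    calc (1:ℝ) = Real.exp 0 := by simp
    _ < Real.exp ((n + 1) / c) := Real.exp_lt_exp.2 this
  set δ : ℝ := min 1 (1 / T) with hδ
  have hδpos : 0 < δ := lt_min one_pos (by positivity)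
  filter_upwards [Ioo_mem_nhdsGT_of_mem (show (0:ℝ) ∈ Set.Ico 0 δ from ⟨le_refl _, hδpos⟩)]
    with β hβ
  obtain ⟨hβ0, hβδ⟩ := hβ
  have hβ1 : β ≤ 1 := le_trans hβδ.le (min_le_left _ _)
  have hT0 : (0:ℝ) < T := by linarith
  have hβT : β * T ≤ 1 := by
    have h : β ≤ 1 / T := le_trans hβδ.le (min_le_right _ _)
    calc β * T ≤ 1 / T * T := mul_le_mul_of_nonneg_right h hT0.le
    _ = 1 := by field_simp
  -- pointwise lower bound on Ioc 1 T
  have key : ∀ t ∈ Set.Ioc (1:ℝ) T,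
      ENNReal.ofReal (c * (1 / t)) ≤
      ENNReal.ofReal
        ((1 - Real.exp (-(∫ s in Set.Ioi t, 1 / (s * Real.exp (1 + (1 + β) * s))))) *
          Real.exp t) := by
    intro t ht
    apply ENNReal.ofReal_le_ofReal
    set g := ∫ s in Set.Ioi t, 1 / (s * Real.exp (1 + (1 + β) * s)) with hg
    have ht1 : 1 ≤ t := ht.1.le
    have hgle : g ≤ Real.exp (-2) := g_le β hβ0.le t ht1
    have hgge : Real.exp (-1 - (1 + β) * (t + 1)) / (t + 1) ≤ g := g_ge β hβ0.le t ht1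
    have hg0 : 0 ≤ g := le_trans (by positivity) hgge
    have hg1 : g ≤ 1 := le_trans hgle (by
      rw [show (1:ℝ) = Real.exp 0 by simp]
      exact (Real.exp_le_exp.2 (by norm_num)))
    -- 1 - exp(-g) ≥ g * exp(-1)
    have h1 : g * Real.exp (-1) ≤ 1 - Real.exp (-g) := by
      have e1 : g + 1 ≤ Real.exp g := by linarith [Real.add_one_le_exp g]
      have e2 : Real.exp (-g) * Real.exp g = 1 := by rw [← Real.exp_add]; simp
      have e3 : Real.exp (-1) ≤ Real.exp (-g) := Real.exp_le_exp.2 (by linarith)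
      have e4 := mul_le_mul_of_nonneg_left e1 (Real.exp_pos (-g)).le
      have e5 := mul_le_mul_of_nonneg_left e3 hg0
      nlinarith [Real.exp_pos g, Real.exp_pos (-g), Real.exp_pos (-1 : ℝ)]
    -- combine
    have h2 : Real.exp (-1 - (1 + β) * (t + 1)) / (t + 1) * Real.exp (-1) * Real.exp t
        = Real.exp (t - 2 - (1 + β) * (t + 1)) / (t + 1) := by
      rw [div_mul_eq_mul_div, div_mul_eq_mul_div, ← Real.exp_add, ← Real.exp_add]
      ring_nf
    have h3 : (-5:ℝ) ≤ t - 2 - (1 + β) * (t + 1) := by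
      have hβt : β * (t + 1) ≤ 2 := by nlinarith [ht.2, hT1, hβ0.le]
      nlinarith
    have h4 : c * (1 / t) ≤ Real.exp (t - 2 - (1 + β) * (t + 1)) / (t + 1) := by
      have ht0 : (0:ℝ) < t := by linarith
      have h2t : t + 1 ≤ 2 * t := by linarith
      have heq : c * (1 / t) = Real.exp (-5) / (2 * t) := by rw [hc]; ring
      rw [heq]
      exact div_le_div₀ (Real.exp_pos _).le (Real.exp_le_exp.2 h3) (by linarith) h2t
    calc c * (1 / t) ≤ Real.exp (t - 2 - (1 + β) * (t + 1)) / (t + 1) := h4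
    _ = Real.exp (-1 - (1 + β) * (t + 1)) / (t + 1) * Real.exp (-1) * Real.exp t := h2.symm
    _ ≤ g * Real.exp (-1) * Real.exp t := by
          apply mul_le_mul_of_nonneg_right ?_ (Real.exp_pos t).le
          exact mul_le_mul_of_nonneg_right hgge (Real.exp_pos (-1)).le
    _ ≤ (1 - Real.exp (-g)) * Real.exp t :=
          mul_le_mul_of_nonneg_right h1 (Real.exp_pos t).le
  -- the lower-bound integral equals n+1
  have hint : IntegrableOn (fun t : ℝ => c * (1 / t)) (Set.Ioc 1 T) := by
    apply (ContinuousOn.integrableOn_Icc ?_).mono_set Set.Ioc_subset_Icc_self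
    apply ContinuousOn.mul continuousOn_const
    apply ContinuousOn.div continuousOn_const continuousOn_id
    intro x hx; exact ne_of_gt (lt_of_lt_of_le one_pos hx.1)
  have hval : (∫ t in Set.Ioc (1:ℝ) T, c * (1 / t)) = n + 1 := by
    rw [← intervalIntegral.integral_of_le hT1.le]
    rw [intervalIntegral.integral_const_mul]
    rw [integral_one_div (by
      intro h
      rcases Set.mem_uIcc.1 h with ⟨h1, _⟩ | ⟨_, h2⟩
      · linarith
      · linarith)]
    rw [div_one, hT, Real.log_exp]
    field_simp
  have hlow : ENNReal.ofReal ((n:ℝ) + 1) = ∫⁻ t in Set.Ioc (1:ℝ) T, ENNReal.ofReal (c * (1 / t)) := by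
    rw [← hval]
    apply ofReal_integral_eq_lintegral_ofReal hint
    filter_upwards [ae_restrict_mem measurableSet_Ioc] with t ht
    have : (0:ℝ) < t := lt_of_lt_of_le one_pos ht.1.le
    positivity
  calc (n : ℝ≥0∞) < ENNReal.ofReal ((n:ℝ) + 1) := by
        rw [ENNReal.ofReal_add (by positivity) one_pos.le]
        simp only [ENNReal.ofReal_natCast, ENNReal.ofReal_one]
        exact ENNReal.lt_add_right (ENNReal.natCast_ne_top n) one_ne_zero
  _ = ∫⁻ t in Set.Ioc (1:ℝ) T, ENNReal.ofReal (c * (1 / t)) := hlow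
  _ ≤ ∫⁻ t in Set.Ioc (1:ℝ) T,
        ENNReal.ofReal
          ((1 - Real.exp (-(∫ s in Set.Ioi t, 1 / (s * Real.exp (1 + (1 + β) * s))))) *
            Real.exp t) := by
        apply lintegral_mono_ae
        filter_upwards [ae_restrict_mem measurableSet_Ioc] with t ht
        exact key t ht
  _ ≤ ∫⁻ t in Set.Ioi (0:ℝ),
        ENNReal.ofReal
          ((1 - Real.exp (-(∫ s in Set.Ioi t, 1 / (s * Real.exp (1 + (1 + β) * s))))) *
            Real.exp t) := lintegral_mono_set (fun t ht => lt_trans one_pos ht.1)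
  _ ≤ (1 : ℝ≥0∞) + _ := le_add_self
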